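/- If (g,≺) is a maximally delayed causal flow of (G,I,O), then V₁^≺ = { u ∈ V∖O : ∃v ∈ O∖I, N(v) ∩ (V∖O) = {u} }. -/

import Mathlib

open Set

variable {V : Type*}

def oddN (G : SimpleGraph V) (K : Set V) : Set V :=
  {u | Odd {v | v ∈ K ∧ G.Adj u v}.ncard}

def IsSPO (lt : V → V → Prop) : Prop :=
  (∀ a, ¬ lt a a) ∧ (∀ a b c, lt a b → lt b c → lt a c)

def IsCausalFlow (G : SimpleGraph V) (I O : Set V) (g : V → V) (lt : V → V → Prop) : Prop :=
  IsSPO lt ∧ (∀ i, i ∉ O → g i ∉ I) ∧ (∀ i, i ∉ O → lt i (g i)) ∧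
  (∀ i, i ∉ O → ∀ j, G.Adj (g i) j → j = i ∨ lt i j) ∧
  (∀ i, i ∉ O → G.Adj (g i) i)

def IsGFlow (G : SimpleGraph V) (I O : Set V) (g : V → Set V) (lt : V → V → Prop) : Prop :=
  IsSPO lt ∧ (∀ i, i ∉ O → (g i).Nonempty ∧ g i ∩ I = ∅) ∧
  (∀ i, i ∉ O → ∀ j ∈ g i, lt i j) ∧
  (∀ i, i ∉ O → ∀ j ∈ oddN G (g i), j = i ∨ lt i j) ∧
  (∀ i, i ∉ O → i ∈ oddN G (g i))

def maxSet (lt : V → V → Prop) (X : Set V) : Set V :=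
  {u ∈ X | ∀ v ∈ X, ¬ lt u v}

def rest (lt : V → V → Prop) : ℕ → Set V
  | 0 => Set.univ
  | k+1 => rest lt k \ maxSet lt (rest lt k)

def layer (lt : V → V → Prop) (k : ℕ) : Set V := maxSet lt (rest lt k)

def cumul (lt : V → V → Prop) (k : ℕ) : Set V := Set.univ \ rest lt (k+1)

def MoreDelayed (lt lt' : V → V → Prop) : Prop :=
  (∀ k, (cumul lt' k).ncard ≤ (cumul lt k).ncard) ∧
  ∃ k, (cumul lt' k).ncard < (cumul lt k).ncard

noncomputable def flowDepth (lt : V → V → Prop) : ℕ := sInf {d | layer lt (d+1) = ∅}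

def MaxDelayedCausalFlow (G : SimpleGraph V) (I O : Set V) (g : V → V) (lt : V → V → Prop) : Prop :=
  IsCausalFlow G I O g lt ∧
  ∀ g' lt', IsCausalFlow G I O g' lt' → ¬ MoreDelayed lt' lt

def MaxDelayedGFlow (G : SimpleGraph V) (I O : Set V) (g : V → Set V) (lt : V → V → Prop) : Prop :=
  IsGFlow G I O g lt ∧
  ∀ g' lt', IsGFlow G I O g' lt' → ¬ MoreDelayed lt' lt

/-- If `lt'` implies `lt`, then the residual sets of `lt'` are contained in those of `lt`. -/
lemma rest_subset_of_imp {lt lt' : V → V → Prop}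
    (h : ∀ a b, lt' a b → lt a b) : ∀ k, rest lt' k ⊆ rest lt k := by
  intro k
  induction k with
  | zero => simp [rest]
  | succ n ih =>
    intro a ha
    obtain ⟨ha1, ha2⟩ := ha
    refine ⟨ih ha1, fun hmax => ha2 ⟨ha1, fun v hv hlv => hmax.2 v (ih hv) (h _ _ hlv)⟩⟩

lemma rest_one (lt : V → V → Prop) : rest lt 1 = Set.univ \ layer lt 0 := by
  simp [rest, layer]

/-- For a maximally delayed causal flow, the top layer is exactly the output set. -/
lemma layer_zero_eq [Fintype V] {G : SimpleGraph V} {I O : Set V} {g : V → V}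
    {lt : V → V → Prop} (h : MaxDelayedCausalFlow G I O g lt) :
    layer lt 0 = O := by
  obtain ⟨⟨hspo, hI, hlt, hnb, hadj⟩, hmax⟩ := h
  have hsub : layer lt 0 ⊆ O := by
    intro a ha
    by_contra haO
    exact ha.2 (g a) (by trivial) (hlt a haO)
  refine Subset.antisymm hsub ?_
  by_contra hns
  obtain ⟨o, hoO, hol⟩ := not_subset.1 hns
  set lt' : V → V → Prop := fun a b => lt a b ∧ a ∉ O with hlt'def
  have himp : ∀ a b, lt' a b → lt a b := fun a b hab => hab.1
  have hcf : IsCausalFlow G I O g lt' := by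
    refine ⟨⟨fun a ha => hspo.1 a ha.1, fun a b c hab hbc => ⟨hspo.2 a b c hab.1 hbc.1, hab.2⟩⟩,
      hI, fun i hi => ⟨hlt i hi, hi⟩, fun i hi j hj => ?_, hadj⟩
    rcases hnb i hi j hj with h1 | h1
    · exact Or.inl h1
    · exact Or.inr ⟨h1, hi⟩
  refine hmax g lt' hcf ⟨?_, ?_⟩
  · intro k
    have hr := rest_subset_of_imp himp (k+1)
    exact Set.ncard_le_ncard (fun x hx => ⟨hx.1, fun hrr => hx.2 (hr hrr)⟩) (Set.toFinite _)
  · refine ⟨0, Set.ncard_lt_ncard ⟨?_, ?_⟩ (Set.toFinite _)⟩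
    · intro x hx
      exact ⟨hx.1, fun hrr => hx.2 (rest_subset_of_imp himp 1 hrr)⟩
    · intro hsub2
      have ho' : o ∈ cumul lt' 0 := by
        refine ⟨by trivial, fun hr => ?_⟩
        exact hr.2 ⟨by trivial, fun v _ hv => hv.2 hoO⟩
      have ho2 : o ∉ cumul lt 0 := by
        rintro ⟨-, hr⟩
        have : o ∈ rest lt 1 := by
          rw [rest_one]
          exact ⟨by trivial, hol⟩
        exact hr this
      exact ho2 (hsub2 ho')

theorem max_delayed_causal_layer_one {V : Type*} [Fintype V] (G : SimpleGraph V)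
    (I O : Set V) (g : V → V) (lt : V → V → Prop)
    (h : MaxDelayedCausalFlow G I O g lt) :
    layer lt 1 = {u | u ∉ O ∧ ∃ v ∈ O \ I, G.neighborSet v ∩ Oᶜ = {u}} := by
  classical
  have hl0 : layer lt 0 = O := layer_zero_eq h
  have hr1 : rest lt 1 = Oᶜ := by
    rw [rest_one, hl0]
    ext x; simp
  obtain ⟨⟨hspo, hI, hlt, hnb, hadj⟩, hmax⟩ := h
  ext u
  simp only [layer, maxSet, mem_setOf_eq, hr1, mem_compl_iff]
  constructor
  · rintro ⟨huO, humax⟩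
    refine ⟨huO, g u, ⟨?_, hI u huO⟩, ?_⟩
    · by_contra hgO
      exact humax (g u) hgO (hlt u huO)
    · ext w
      simp only [mem_inter_iff, SimpleGraph.mem_neighborSet, mem_compl_iff, mem_singleton_iff]
      constructor
      · rintro ⟨hadjw, hwO⟩
        rcases hnb u huO w hadjw with h1 | h1
        · exact h1
        · exact absurd h1 (humax w hwO)
      · rintro rfl
        exact ⟨hadj _ huO, huO⟩
  · rintro ⟨huO, v, ⟨hvO, hvI⟩, hN⟩
    have huv : G.Adj v u := by
      have : u ∈ G.neighborSet v ∩ Oᶜ := hN ▸ rfl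
      exact this.1
    refine ⟨huO, fun w hwO hltuw => ?_⟩
    -- suppose lt u w with w ∉ O; construct a more delayed flow
    set g' : V → V := Function.update g u v with hg'def
    set lt'' : V → V → Prop := fun a b => a ∉ O ∧ (b ∈ O ∨ (a ≠ u ∧ lt a b)) with hlt''def
    have hcf : IsCausalFlow G I O g' lt'' := by
      refine ⟨⟨?_, ?_⟩, ?_, ?_, ?_, ?_⟩
      · rintro a ⟨haO, hO | ⟨-, hlaa⟩⟩
        · exact haO hO
        · exact hspo.1 a hlaa
      · rintro a b c ⟨haO, hab⟩ ⟨hbO, hbc⟩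
        rcases hab with hbO' | ⟨hau, hlab⟩
        · exact absurd hbO' hbO
        · refine ⟨haO, ?_⟩
          rcases hbc with hcO | ⟨hbu, hlbc⟩
          · exact Or.inl hcO
          · exact Or.inr ⟨hau, hspo.2 a b c hlab hlbc⟩
      · intro i hi
        by_cases hiu : i = u
        · subst hiu; simpa [hg'def] using hvI
        · simpa [hg'def, Function.update_of_ne hiu] using hI i hi
      · intro i hi
        by_cases hiu : i = u
        · subst hiu
          exact ⟨hi, Or.inl (by simpa [hg'def] using hvO)⟩
        · exact ⟨hi, Or.inr ⟨hiu, by simpa [hg'def, Function.update_of_ne hiu] using hlt i hi⟩⟩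
      · intro i hi j hj
        by_cases hiu : i = u
        · subst hiu
          rw [hg'def, Function.update_self] at hj
          by_cases hjO : j ∈ O
          · exact Or.inr ⟨hi, Or.inl hjO⟩
          · left
            have : j ∈ G.neighborSet v ∩ Oᶜ := ⟨hj, hjO⟩
            rw [hN] at this
            exact this
        · rw [hg'def, Function.update_of_ne hiu] at hj
          rcases hnb i hi j hj with h1 | h1
          · exact Or.inl h1
          · exact Or.inr ⟨hi, Or.inr ⟨hiu, h1⟩⟩
      · intro i hi
        by_cases hiu : i = u
        · subst hiu; simpa [hg'def] using huv
        · simpa [hg'def, Function.update_of_ne hiu] using hadj i hi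
    -- layers of lt''
    have hmax0 : maxSet lt'' Set.univ = O := by
      ext a
      simp only [maxSet, mem_setOf_eq, mem_univ, true_and]
      constructor
      · intro ha
        by_contra haO
        exact ha v (by trivial) ⟨haO, Or.inl hvO⟩
      · rintro haO b - ⟨haO', -⟩
        exact haO' haO
    have hr1'' : rest lt'' 1 = Oᶜ := by
      have : rest lt'' 1 = Set.univ \ maxSet lt'' (rest lt'' 0) := rfl
      rw [this]
      have h0 : rest lt'' 0 = (Set.univ : Set V) := rfl
      rw [h0, hmax0]
      ext x; simp
    have hrestsub : ∀ k, rest lt'' k ⊆ rest lt k := by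
      intro k
      induction k with
      | zero => exact subset_rfl
      | succ n ih =>
        rintro a ⟨ha1, ha2⟩
        refine ⟨ih ha1, fun hamax => ha2 ⟨ha1, fun b hb hltab => ?_⟩⟩
        -- hamax : a ∈ maxSet lt (rest lt n), hltab : lt'' a b, b ∈ rest lt'' n
        obtain ⟨haO, hab⟩ := hltab
        match n, ha1, hb, ih, hamax with
        | 0, _, _, _, hamax =>
          -- rest 0 = univ, maxSet lt univ = layer lt 0 = O
          have : a ∈ layer lt 0 := hamax
          rw [hl0] at this
          exact haO this
        | (m+1), ha1, hb, ih, hamax =>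
          have hbO : b ∉ O := by
            have hb1 : b ∈ rest lt'' 1 := by
              have hmono : ∀ j, rest lt'' (j+1) ⊆ rest lt'' j := fun j x hx => hx.1
              have : ∀ j, rest lt'' (j+1) ⊆ rest lt'' 1 := by
                intro j
                induction j with
                | zero => exact subset_rfl
                | succ p ihp => exact (hmono (p+1)).trans ihp
              exact this m hb
            rw [hr1''] at hb1
            exact hb1
          rcases hab with hbO' | ⟨-, hlab⟩
          · exact hbO hbO'
          · exact hamax.2 b (ih hb) hlab
    refine hmax g' lt'' hcf ⟨?_, ?_⟩
    · intro k
      exact Set.ncard_le_ncard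
        (fun x hx => ⟨hx.1, fun hrr => hx.2 (hrestsub (k+1) hrr)⟩) (Set.toFinite _)
    · refine ⟨1, Set.ncard_lt_ncard ⟨?_, ?_⟩ (Set.toFinite _)⟩
      · intro x hx
        exact ⟨hx.1, fun hrr => hx.2 (hrestsub 2 hrr)⟩
      · intro hsub2
        have hu'' : u ∈ cumul lt'' 1 := by
          refine ⟨by trivial, ?_⟩
          rintro ⟨hu1, hu2⟩
          refine hu2 ⟨hu1, fun b hb hltub => ?_⟩
          obtain ⟨-, hab⟩ := hltub
          rw [hr1''] at hb
          rcases hab with hbO | ⟨hne, -⟩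
          · exact hb hbO
          · exact hne rfl
        have hu2 : u ∉ cumul lt 1 := by
          rintro ⟨-, hr⟩
          refine hr ⟨?_, ?_⟩
          · rw [hr1]; exact huO
          · rintro ⟨-, humax⟩
            exact humax w (by rw [hr1]; exact hwO) hltuw
        exact hu2 (hsub2 hu'')
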